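/- If a filtered probability space has F_{0+} trivial on the event {τ > ε} for every ε in a set of full P_τ-measure accumulating at 0, and P(τ > 0) = 1, then F_{0+} is P-trivial: every A ∈ F_{0+} has P(A) ∈ {0,1}. More precisely: if for each admissible ε and each A ∈ F_{0+} one has P(A ∩ {τ > ε}) ∈ {0, P(τ > ε)}, then P(A) ∈ {0,1}. -/

import Mathlib

open MeasureTheory Filter Set
open scoped ENNReal Topology

/-- If `F0` (playing the role of `F_{0+}`) is trivial on the event `{τ > ε}` for every
admissible `ε` (i.e. `ε ∈ (0,∞) ∖ 𝔄` where `P_τ(𝔄) = 0` and admissible `ε` accumulate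
at `0`), in the sense that `P(A ∩ {τ > ε}) ∈ {0, P(τ > ε)}` for every `A ∈ F0`, and
`P(τ > 0) = 1`, then `F0` is `P`-trivial: every `A ∈ F0` has `P(A) ∈ {0,1}`. -/
theorem stmt18 {Ω : Type*} [mΩ : MeasurableSpace Ω] (P : Measure Ω) [IsProbabilityMeasure P]
    (τ : Ω → ℝ) (hτ : Measurable τ) (hτpos : ∀ᵐ ω ∂P, 0 < τ ω)
    (𝔄 : Set ℝ) (h𝔄 : Measure.map τ P 𝔄 = 0)
    (F0 : MeasurableSpace Ω) (hF0 : F0 ≤ mΩ)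
    (hacc : ∀ δ : ℝ, 0 < δ → ∃ ε : ℝ, 0 < ε ∧ ε < δ ∧ ε ∉ 𝔄)
    (h : ∀ ε : ℝ, 0 < ε → ε ∉ 𝔄 → ∀ A : Set Ω, MeasurableSet[F0] A →
      P (A ∩ {ω | ε < τ ω}) = 0 ∨ P (A ∩ {ω | ε < τ ω}) = P {ω | ε < τ ω}) :
    ∀ A : Set Ω, MeasurableSet[F0] A → P A = 0 ∨ P A = 1 := by
  intro A hA
  choose ε hε0 hεlt hεA using fun n : ℕ => hacc (1 / (n + 1)) (by positivity)
  set E : ℕ → Set Ω := fun n => {ω | ε n < τ ω} with hE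
  -- covering lemma
  have hcover : ∀ B : Set Ω, (∀ n, P (B ∩ E n) = 0) → P B = 0 := by
    intro B hB
    have h1 : P (B ∩ {ω | 0 < τ ω}) = 0 := by
      have hsub : B ∩ {ω | 0 < τ ω} ⊆ ⋃ n, B ∩ E n := by
        rintro ω ⟨hωB, hωτ⟩
        obtain ⟨n, hn⟩ := exists_nat_one_div_lt (show (0:ℝ) < τ ω from hωτ)
        exact mem_iUnion.2 ⟨n, hωB, (hεlt n).trans hn⟩
      refine le_antisymm ?_ zero_le
      calc P (B ∩ {ω | 0 < τ ω}) ≤ P (⋃ n, B ∩ E n) := measure_mono hsub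
        _ ≤ ∑' n, P (B ∩ E n) := measure_iUnion_le _
        _ = 0 := by simp [hB]
    have h2 : P (B \ {ω | 0 < τ ω}) = 0 := by
      refine le_antisymm ?_ zero_le
      calc P (B \ {ω | 0 < τ ω}) ≤ P {ω | 0 < τ ω}ᶜ := measure_mono (diff_subset_compl _ _)
        _ = 0 := by rw [compl_setOf]; simpa using (ae_iff.mp hτpos)
    refine le_antisymm ?_ zero_le
    calc P B ≤ P (B ∩ {ω | 0 < τ ω}) + P (B \ {ω | 0 < τ ω}) :=
          measure_le_inter_add_diff _ _ _
      _ = 0 := by rw [h1, h2, add_zero]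
  by_cases hall : ∀ n, P (A ∩ E n) = 0
  · exact Or.inl (hcover A hall)
  · push_neg at hall
    obtain ⟨n0, hn0⟩ := hall
    have hAn0 : P (A ∩ E n0) = P (E n0) :=
      (h (ε n0) (hε0 n0) (hεA n0) A hA).resolve_left hn0
    have hcomp0 : P (Aᶜ ∩ E n0) = 0 := by
      have hsplit := measure_inter_add_diff (μ := P) (E n0) (hF0 _ hA)
      have hdiff : E n0 \ A = Aᶜ ∩ E n0 := by ext ω; simp [Set.mem_diff, and_comm]
      rw [hdiff, inter_comm, hAn0] at hsplit
      exact (ENNReal.add_right_inj (measure_ne_top P (E n0))).mp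
        (by rw [add_zero]; exact hsplit)
    have hcomp : ∀ m, P (Aᶜ ∩ E m) = 0 := by
      intro m
      by_contra hm
      have hAm : P (Aᶜ ∩ E m) = P (E m) :=
        (h (ε m) (hε0 m) (hεA m) Aᶜ hA.compl).resolve_left hm
      have hAm0 : P (A ∩ E m) = 0 := by
        have hsplit := measure_inter_add_diff (μ := P) (E m) (hF0 _ hA.compl)
        have hdiff : E m \ Aᶜ = A ∩ E m := by ext ω; simp [Set.mem_diff, and_comm]
        rw [hdiff, inter_comm, hAm] at hsplit
        exact (ENNReal.add_right_inj (measure_ne_top P (E m))).mp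
          (by rw [add_zero]; exact hsplit)
      rcases le_total (ε m) (ε n0) with hle | hle
      · have hsub : A ∩ E n0 ⊆ A ∩ E m := by
          rintro ω ⟨h1, h2⟩; exact ⟨h1, lt_of_le_of_lt hle h2⟩
        have : P (A ∩ E n0) = 0 :=
          le_antisymm (hAm0 ▸ measure_mono hsub) zero_le
        exact hn0 this
      · have hsub : Aᶜ ∩ E m ⊆ Aᶜ ∩ E n0 := by
          rintro ω ⟨h1, h2⟩; exact ⟨h1, lt_of_le_of_lt hle h2⟩
        exact hm (le_antisymm (hcomp0 ▸ measure_mono hsub) zero_le)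
    have : P Aᶜ = 0 := hcover Aᶜ hcomp
    exact Or.inr ((prob_compl_eq_zero_iff (hF0 _ hA)).mp this)
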